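/- If u₁ and u₂ are both real-analytic in a neighborhood of 0, each satisfies the perturbed Lane–Emden equation for all x ∈ (0, ε) for some ε > 0, and u₁(0) = u₂(0), then u₁ = u₂ on some neighborhood of 0 (the local analytic solution at x = 0 is uniquely determined by the initial value u(0) = c). -/

import Mathlib

set_option autoImplicit false

open Real Set Filter
open scoped Topology

set_option maxHeartbeats 1000000

private lemma myAnalyticAt_deriv {f : ℝ → ℝ} {x : ℝ} (h : AnalyticAt ℝ f x) :
    AnalyticAt ℝ (deriv f) x := by
  obtain ⟨s, hs, hf⟩ := h.exists_mem_nhds_analyticOnNhd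
  exact hf.deriv x (mem_of_mem_nhds hs)

private lemma myPolyAnalytic (S : Finset ℤ) (f : ℤ → ℝ) (e : ℤ → ℕ) (x : ℝ) :
    AnalyticAt ℝ (fun z : ℝ => ∑ k ∈ S, f k * z ^ e k) x :=
  S.analyticAt_fun_sum fun k _ => analyticAt_const.mul (analyticAt_id.pow _)

private lemma myZpowToNat (x : ℝ) (j : ℤ) (hj : 0 ≤ j) : x ^ j = x ^ j.toNat := by
  conv_lhs => rw [← Int.toNat_of_nonneg hj]
  rw [zpow_natCast]

private lemma myMulZpow {x : ℝ} (hx : x ≠ 0) (j : ℤ) (hj : 0 ≤ j + 1) :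
    x * x ^ j = x ^ (j + 1).toNat := by
  rw [← myZpowToNat x (j+1) hj, zpow_add_one₀ hx, mul_comm]

private lemma myPowHelper (k : ℕ) (z A B : ℝ) :
    z * ((k:ℝ) * z ^ (k - 1) * A + z ^ k * B) = z ^ k * ((k:ℝ) * A + z * B) := by
  cases k with
  | zero => simp
  | succ k => simp only [Nat.add_sub_cancel]; push_cast; ring

/-- Two functions that are real-analytic near `0`, satisfy the perturbed
Lane–Emden equation on some right-neighbourhood `(0, ε)` of `0`, and share the initial
value at `0`, coincide in a neighbourhood of `0`. -/
theorem perturbedLaneEmden_local_analytic_solution_unique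
    (p : ℕ) (hp : 1 < p) (α δ : ℝ) (hα : 0 < α) (hδ : δ ≠ 0)
    (n : ℕ) (a b c : ℤ → ℝ)
    (u₁ u₂ : ℝ → ℝ)
    (h₁ : AnalyticAt ℝ u₁ 0) (h₂ : AnalyticAt ℝ u₂ 0)
    (heq₁ : ∃ ε > (0 : ℝ), ∀ x ∈ Ioo (0 : ℝ) ε,
      (1 + ∑ k ∈ Finset.Icc (-1 : ℤ) (n : ℤ), a k * x ^ (k + 2)) * deriv (deriv u₁) x
        + (α / x + ∑ k ∈ Finset.Icc (-1 : ℤ) (n : ℤ), b k * x ^ (k + 1)) * deriv u₁ x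
        + (∑ k ∈ Finset.Icc (-1 : ℤ) (n : ℤ), c k * x ^ k) * u₁ x
        + δ * u₁ x ^ p = 0)
    (heq₂ : ∃ ε > (0 : ℝ), ∀ x ∈ Ioo (0 : ℝ) ε,
      (1 + ∑ k ∈ Finset.Icc (-1 : ℤ) (n : ℤ), a k * x ^ (k + 2)) * deriv (deriv u₂) x
        + (α / x + ∑ k ∈ Finset.Icc (-1 : ℤ) (n : ℤ), b k * x ^ (k + 1)) * deriv u₂ x
        + (∑ k ∈ Finset.Icc (-1 : ℤ) (n : ℤ), c k * x ^ k) * u₂ x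
        + δ * u₂ x ^ p = 0)
    (h0 : u₁ 0 = u₂ 0) :
    u₁ =ᶠ[nhds (0 : ℝ)] u₂ := by
  classical
  by_contra hne
  obtain ⟨ε₁, hε₁, hu₁⟩ := heq₁
  obtain ⟨ε₂, hε₂, hu₂⟩ := heq₂
  set S : Finset ℤ := Finset.Icc (-1 : ℤ) (n : ℤ) with hSdef
  set SA : ℝ → ℝ := fun x => 1 + ∑ k ∈ S, a k * x ^ (k + 2).toNat with hSA
  set SB : ℝ → ℝ := fun x => α + ∑ k ∈ S, b k * x ^ (k + 2).toNat with hSB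
  set SC : ℝ → ℝ := fun x => ∑ k ∈ S, c k * x ^ (k + 1).toNat with hSC
  have hSAan : AnalyticAt ℝ SA 0 := analyticAt_const.add (myPolyAnalytic S a _ 0)
  have hSBan : AnalyticAt ℝ SB 0 := analyticAt_const.add (myPolyAnalytic S b _ 0)
  have hSCan : AnalyticAt ℝ SC 0 := myPolyAnalytic S c _ 0
  -- conversion of the polynomial sums for x ≠ 0
  have hconv : ∀ x : ℝ, x ≠ 0 →
      SA x = (1 + ∑ k ∈ S, a k * x ^ (k + 2)) ∧
      SB x = x * (α / x + ∑ k ∈ S, b k * x ^ (k + 1)) ∧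
      SC x = x * ∑ k ∈ S, c k * x ^ (k : ℤ) := by
    intro x hx
    refine ⟨?_, ?_, ?_⟩
    · simp only [hSA]
      congr 1
      refine Finset.sum_congr rfl fun k hk => ?_
      have hk' : (-1:ℤ) ≤ k := (Finset.mem_Icc.mp hk).1
      rw [myZpowToNat x (k+2) (by omega)]
    · simp only [hSB]
      rw [mul_add, show x * (α / x) = α from by field_simp, Finset.mul_sum]
      congr 1
      refine Finset.sum_congr rfl fun k hk => ?_
      have hk' : (-1:ℤ) ≤ k := (Finset.mem_Icc.mp hk).1
      rw [show x * (b k * x ^ (k+1)) = b k * (x * x ^ (k+1)) from by ring,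
        myMulZpow hx (k+1) (by omega), show (k+1+1 : ℤ) = k+2 from by ring]
    · simp only [hSC]
      rw [Finset.mul_sum]
      refine Finset.sum_congr rfl fun k hk => ?_
      have hk' : (-1:ℤ) ≤ k := (Finset.mem_Icc.mp hk).1
      rw [show x * (c k * x ^ (k:ℤ)) = c k * (x * x ^ (k:ℤ)) from by ring,
        myMulZpow hx k (by omega)]
  -- the multiplied-by-x equations as analytic functions
  set G₁ : ℝ → ℝ := fun x => SA x * (x * deriv (deriv u₁) x) + SB x * deriv u₁ x
      + SC x * u₁ x + δ * (x * u₁ x ^ p) with hG₁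
  set G₂ : ℝ → ℝ := fun x => SA x * (x * deriv (deriv u₂) x) + SB x * deriv u₂ x
      + SC x * u₂ x + δ * (x * u₂ x ^ p) with hG₂
  have hG₁zero : ∀ x ∈ Ioo (0:ℝ) ε₁, G₁ x = 0 := by
    intro x hx
    have hx0 : x ≠ 0 := ne_of_gt hx.1
    obtain ⟨e1, e2, e3⟩ := hconv x hx0
    have h0' := hu₁ x hx
    simp only [hG₁]
    linear_combination (x * deriv (deriv u₁) x) * e1 + deriv u₁ x * e2 + u₁ x * e3 + x * h0'
  have hG₂zero : ∀ x ∈ Ioo (0:ℝ) ε₂, G₂ x = 0 := by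
    intro x hx
    have hx0 : x ≠ 0 := ne_of_gt hx.1
    obtain ⟨e1, e2, e3⟩ := hconv x hx0
    have h0' := hu₂ x hx
    simp only [hG₂]
    linear_combination (x * deriv (deriv u₂) x) * e1 + deriv u₂ x * e2 + u₂ x * e3 + x * h0'
  have hG₁an : AnalyticAt ℝ G₁ 0 :=
    (((hSAan.mul (analyticAt_id.mul (myAnalyticAt_deriv (myAnalyticAt_deriv h₁)))).add
      (hSBan.mul (myAnalyticAt_deriv h₁))).add (hSCan.mul h₁)).add
      (analyticAt_const.mul (analyticAt_id.mul (h₁.pow p)))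
  have hG₂an : AnalyticAt ℝ G₂ 0 :=
    (((hSAan.mul (analyticAt_id.mul (myAnalyticAt_deriv (myAnalyticAt_deriv h₂)))).add
      (hSBan.mul (myAnalyticAt_deriv h₂))).add (hSCan.mul h₂)).add
      (analyticAt_const.mul (analyticAt_id.mul (h₂.pow p)))
  have hG₁ev : ∀ᶠ z in 𝓝 (0:ℝ), G₁ z = 0 := by
    rw [← hG₁an.frequently_zero_iff_eventually_zero]
    have hev : ∀ᶠ z in 𝓝[>] (0:ℝ), G₁ z = 0 :=
      Filter.eventually_of_mem (Ioo_mem_nhdsGT_of_mem ⟨le_refl 0, hε₁⟩) hG₁zero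
    exact hev.frequently.filter_mono
      (nhdsWithin_mono 0 fun z hz => by simpa using ne_of_gt hz)
  have hG₂ev : ∀ᶠ z in 𝓝 (0:ℝ), G₂ z = 0 := by
    rw [← hG₂an.frequently_zero_iff_eventually_zero]
    have hev : ∀ᶠ z in 𝓝[>] (0:ℝ), G₂ z = 0 :=
      Filter.eventually_of_mem (Ioo_mem_nhdsGT_of_mem ⟨le_refl 0, hε₂⟩) hG₂zero
    exact hev.frequently.filter_mono
      (nhdsWithin_mono 0 fun z hz => by simpa using ne_of_gt hz)
  -- Stage 3: the difference u₁ - u₂ and its order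
  have hsub : AnalyticAt ℝ (fun z => u₁ z - u₂ z) 0 := h₁.sub h₂
  have hne2 : ¬ ∀ᶠ z in 𝓝 (0:ℝ), u₁ z - u₂ z = 0 := fun hf =>
    hne (hf.mono fun z hz => sub_eq_zero.mp hz)
  have hord : analyticOrderAt (fun z => u₁ z - u₂ z) 0 ≠ ⊤ := fun h => hne2 (analyticOrderAt_eq_top.mp h)
  obtain ⟨m, hm⟩ := WithTop.ne_top_iff_exists.mp hord
  obtain ⟨g, hg, hg0, hfg⟩ := (hsub.analyticOrderAt_eq_natCast (n := m)).mp hm.symm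
  have hfg' : (fun z => u₁ z - u₂ z) =ᶠ[𝓝 (0:ℝ)] (fun z => z ^ m * g z) := by
    filter_upwards [hfg] with z hz
    simpa [smul_eq_mul] using hz
  have hm1 : m ≠ 0 := by
    intro hm0
    have h00 : u₁ 0 - u₂ 0 = (0:ℝ) ^ m * g 0 := hfg'.self_of_nhds
    rw [hm0, pow_zero, one_mul, h0, sub_self] at h00
    exact hg0 h00.symm
  obtain ⟨m', rfl⟩ : ∃ m', m = m' + 1 := ⟨m - 1, by omega⟩
  -- Stage 4: derivative computations
  set g1 : ℝ → ℝ := fun z => ((m':ℝ)+1) * g z + z * deriv g z with hg1def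
  set g2 : ℝ → ℝ := fun z => (m':ℝ) * g1 z + z * deriv g1 z with hg2def
  have hg1an : AnalyticAt ℝ g1 0 :=
    (analyticAt_const.mul hg).add (analyticAt_id.mul (myAnalyticAt_deriv hg))
  have hg2an : AnalyticAt ℝ g2 0 :=
    (analyticAt_const.mul hg1an).add (analyticAt_id.mul (myAnalyticAt_deriv hg1an))
  -- first derivative
  have hder1 : deriv (fun z => u₁ z - u₂ z) =ᶠ[𝓝 (0:ℝ)] fun z => z ^ m' * g1 z := by
    refine hfg'.deriv.trans ?_
    filter_upwards [hg.eventually_analyticAt] with z hz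
    rw [deriv_fun_mul (differentiableAt_pow _) hz.differentiableAt, deriv_pow_field]
    simp only [hg1def, Nat.add_sub_cancel]
    push_cast
    ring
  -- second derivative, multiplied by z
  have hder2 : ∀ᶠ z in 𝓝 (0:ℝ), z * deriv (deriv (fun z => u₁ z - u₂ z)) z
      = z ^ m' * g2 z := by
    have h' : deriv (deriv (fun z => u₁ z - u₂ z))
        =ᶠ[𝓝 (0:ℝ)] deriv (fun z => z ^ m' * g1 z) := hder1.deriv
    filter_upwards [h', hg1an.eventually_analyticAt] with z hz hz1
    rw [hz, deriv_fun_mul (differentiableAt_pow _) hz1.differentiableAt, deriv_pow_field]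
    simp only [hg2def]
    exact myPowHelper m' z (g1 z) (deriv g1 z)
  -- relating deriv of difference to difference of derivs
  have hdsub : deriv (fun z => u₁ z - u₂ z)
      =ᶠ[𝓝 (0:ℝ)] fun z => deriv u₁ z - deriv u₂ z := by
    filter_upwards [h₁.eventually_analyticAt, h₂.eventually_analyticAt] with z hz1 hz2
    exact deriv_sub hz1.differentiableAt hz2.differentiableAt
  have hd2sub : deriv (deriv (fun z => u₁ z - u₂ z))
      =ᶠ[𝓝 (0:ℝ)] fun z => deriv (deriv u₁) z - deriv (deriv u₂) z := by
    refine hdsub.deriv.trans ?_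
    filter_upwards [(myAnalyticAt_deriv h₁).eventually_analyticAt,
      (myAnalyticAt_deriv h₂).eventually_analyticAt] with z hz1 hz2
    exact deriv_sub hz1.differentiableAt hz2.differentiableAt
  -- eventual equalities in terms of u₁, u₂
  have hE1 : ∀ᶠ z in 𝓝 (0:ℝ), deriv u₁ z - deriv u₂ z = z ^ m' * g1 z := by
    filter_upwards [hdsub, hder1] with z hz1 hz2
    rw [← hz1]; exact hz2
  have hE2 : ∀ᶠ z in 𝓝 (0:ℝ), z * (deriv (deriv u₁) z - deriv (deriv u₂) z)
      = z ^ m' * g2 z := by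
    filter_upwards [hd2sub, hder2] with z hz1 hz2
    rw [← hz1]; exact hz2
  -- Stage 5: the function H and the final contradiction
  set T : ℝ → ℝ := fun z => ∑ i ∈ Finset.range p, u₁ z ^ i * u₂ z ^ (p - 1 - i) with hTdef
  have hTan : AnalyticAt ℝ T 0 :=
    Finset.analyticAt_fun_sum _ fun i _ => (h₁.pow i).mul (h₂.pow (p - 1 - i))
  set H : ℝ → ℝ := fun z => SA z * g2 z + SB z * g1 z + SC z * (z * g z)
      + δ * (z ^ 2 * (g z * T z)) with hHdef
  have hHan : AnalyticAt ℝ H 0 :=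
    (((hSAan.mul hg2an).add (hSBan.mul hg1an)).add
      (hSCan.mul (analyticAt_id.mul hg))).add
      (analyticAt_const.mul ((analyticAt_id.pow 2).mul (hg.mul hTan)))
  have main : ∀ᶠ z in 𝓝 (0:ℝ), (0:ℝ) = z ^ m' * H z := by
    filter_upwards [hG₁ev, hG₂ev, hE1, hE2, hfg'] with z e0a e0b e1 e2 e3
    have egeom : u₁ z ^ p - u₂ z ^ p = T z * (u₁ z - u₂ z) := by
      simp only [hTdef]
      exact (geom_sum₂_mul (u₁ z) (u₂ z) p).symm
    simp only [hG₁] at e0a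
    simp only [hG₂] at e0b
    simp only [hHdef]
    linear_combination (-1 : ℝ) * e0a + e0b + SA z * e2 + SB z * e1
      + (SC z + δ * z * T z) * e3 + δ * z * egeom
  -- H vanishes on a punctured neighbourhood, hence at 0 by continuity
  have hHpunct : ∀ᶠ z in 𝓝[≠] (0:ℝ), H z = 0 := by
    filter_upwards [main.filter_mono nhdsWithin_le_nhds, self_mem_nhdsWithin] with z h1' h2'
    have hz0 : z ≠ 0 := h2'
    rcases mul_eq_zero.mp h1'.symm with h | h
    · exact absurd h (pow_ne_zero m' hz0)
    · exact h
  have hHcont : ContinuousAt H 0 := hHan.continuousAt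
  have hH0 : H 0 = 0 := by
    have t1 : Tendsto H (𝓝[≠] (0:ℝ)) (𝓝 (H 0)) := hHcont.continuousWithinAt
    have t2 : Tendsto H (𝓝[≠] (0:ℝ)) (𝓝 0) :=
      Tendsto.congr' (EventuallyEq.symm hHpunct) tendsto_const_nhds
    exact tendsto_nhds_unique t1 t2
  -- compute H 0 explicitly
  have hSA0 : SA 0 = 1 := by
    simp only [hSA]
    rw [Finset.sum_eq_zero, add_zero]
    intro k hk
    have hk' : (-1:ℤ) ≤ k := (Finset.mem_Icc.mp hk).1
    rw [zero_pow (by omega : (k+2).toNat ≠ 0), mul_zero]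
  have hSB0 : SB 0 = α := by
    simp only [hSB]
    rw [Finset.sum_eq_zero, add_zero]
    intro k hk
    have hk' : (-1:ℤ) ≤ k := (Finset.mem_Icc.mp hk).1
    rw [zero_pow (by omega : (k+2).toNat ≠ 0), mul_zero]
  have hg10 : g1 0 = ((m':ℝ)+1) * g 0 := by simp [hg1def]
  have hg20 : g2 0 = (m':ℝ) * g1 0 := by simp [hg2def]
  have hH0' : H 0 = ((m':ℝ)+1) * ((m':ℝ) + α) * g 0 := by
    simp only [hHdef]
    rw [hSA0, hSB0, hg20, hg10]
    ring_nf
  rw [hH0'] at hH0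
  have c1 : ((m':ℝ)+1) ≠ 0 := by positivity
  have c2 : ((m':ℝ) + α) ≠ 0 := by positivity
  rcases mul_eq_zero.mp hH0 with h | h
  · rcases mul_eq_zero.mp h with h' | h'
    · exact c1 h'
    · exact c2 h'
  · exact hg0 h
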